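/- For every real N > 0, the affine polynomials ℓ₀(X) = √(nN) − Σ_{j=1}^{n} Xⱼ and ℓᵢ(X) = Xᵢ + √N for i = 1,…,n all belong to the quadratic module generated by the single polynomial N − Σ_{j=1}^{n} Xⱼ² in ℝ[X₁,…,Xₙ]. -/

import Mathlib

open MvPolynomial

lemma dsum {R : Type*} [CommRing R] {ι : Type*} (s : Finset ι) (f : ι → R) :
    ∑ j ∈ s, ∑ k ∈ s, (f j - f k) * (f j - f k)
      = 2 * ((s.card : R) * ∑ j ∈ s, f j * f j) - 2 * ((∑ j ∈ s, f j) * ∑ j ∈ s, f j) := by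
  simp only [sub_mul, mul_sub, Finset.sum_sub_distrib, Finset.sum_const, nsmul_eq_mul,
    ← Finset.mul_sum, ← Finset.sum_mul]
  ring

lemma isSumSq_sum {R : Type*} [AddCommMonoid R] [Mul R] {ι : Type*} (t : Finset ι) (f : ι → R)
    (h : ∀ j ∈ t, IsSumSq (f j)) : IsSumSq (∑ j ∈ t, f j) := by
  induction t using Finset.cons_induction with
  | empty => simpa using IsSumSq.zero
  | cons i t hit ih =>
    rw [Finset.sum_cons]
    exact (h i (Finset.mem_cons_self i t)).add (ih fun j hj => h j (Finset.mem_cons_of_mem hj))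

/-- Membership in the quadratic module generated by a single element `g`:
`p = σ₀ + σ₁ * g` with `σ₀, σ₁` sums of squares. -/
def QuadMod1 {R : Type*} [CommRing R] (g p : R) : Prop :=
  ∃ σ₀ σ₁ : R, IsSumSq σ₀ ∧ IsSumSq σ₁ ∧ p = σ₀ + σ₁ * g

theorem stmt_3 (n : ℕ) (hn : 1 ≤ n) (N : ℝ) (hN : 0 < N) :
    QuadMod1 (C N - ∑ j, X j ^ 2 : MvPolynomial (Fin n) ℝ)
      (C (Real.sqrt (n * N)) - ∑ j, X j) ∧
    ∀ i : Fin n,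
      QuadMod1 (C N - ∑ j, X j ^ 2 : MvPolynomial (Fin n) ℝ)
        (X i + C (Real.sqrt N)) := by
  have hs0 : (0:ℝ) < Real.sqrt (n * N) := Real.sqrt_pos.mpr (by positivity)
  set s : ℝ := Real.sqrt (n * N) with hs
  constructor
  · -- ℓ₀
    set b : ℝ := Real.sqrt (1 / (2 * s)) with hbdef
    set c : ℝ := Real.sqrt (1 / (4 * s)) with hcdef
    have hb : b * b * (s + s) = 1 := by
      rw [hbdef, Real.mul_self_sqrt (by positivity)]; field_simp; ring
    have hbc : b * b = c * c + c * c := by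
      rw [hbdef, hcdef, Real.mul_self_sqrt (by positivity),
        Real.mul_self_sqrt (by positivity)]
      field_simp; ring
    have hss : s * s = (n : ℝ) * N := Real.mul_self_sqrt (by positivity)
    refine ⟨(C b * (C s - ∑ j, X j)) * (C b * (C s - ∑ j, X j))
        + ∑ j : Fin n, ∑ k : Fin n, (C c * (X j - X k)) * (C c * (X j - X k)),
      ∑ _i : Fin n, C b * C b, ?_, ?_, ?_⟩
    · exact IsSumSq.sq_add _ (isSumSq_sum _ _ fun j _ => IsSumSq.sum_mul_self _ _)
    · exact IsSumSq.sum_mul_self _ _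
    · have hdp : ∑ j : Fin n, ∑ k : Fin n, ((X j : MvPolynomial (Fin n) ℝ) - X k) * (X j - X k)
          = 2 * ((n : MvPolynomial (Fin n) ℝ) * ∑ j, X j * X j)
            - 2 * ((∑ j, X j) * ∑ j, X j) := by
        simpa using dsum (Finset.univ : Finset (Fin n)) (X : Fin n → MvPolynomial (Fin n) ℝ)
      have hpull : ∑ j : Fin n, ∑ k : Fin n, ((C c : MvPolynomial (Fin n) ℝ) * (X j - X k))
            * (C c * (X j - X k))
          = C c * C c * ∑ j : Fin n, ∑ k : Fin n,
              ((X j : MvPolynomial (Fin n) ℝ) - X k) * (X j - X k) := by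
        rw [Finset.mul_sum]
        refine Finset.sum_congr rfl fun j _ => ?_
        rw [Finset.mul_sum]
        exact Finset.sum_congr rfl fun k _ => by ring
      have hsumconst : (∑ _i : Fin n, (C b : MvPolynomial (Fin n) ℝ) * C b)
          = (n : MvPolynomial (Fin n) ℝ) * (C b * C b) := by
        simp [Finset.sum_const, nsmul_eq_mul]
      have hBC : (C b : MvPolynomial (Fin n) ℝ) * C b * (C s + C s) = 1 := by
        rw [← C_1, ← hb]; simp [C_mul, C_add]
      have hB2C : (C b : MvPolynomial (Fin n) ℝ) * C b = C c * C c + C c * C c := by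
        rw [← C_mul, hbc]; simp [C_mul, C_add]
      have hSS : (C s : MvPolynomial (Fin n) ℝ) * C s = (n : MvPolynomial (Fin n) ℝ) * C N := by
        rw [← C_mul, hss, C_mul, map_natCast]
      have hsq : (∑ j, (X j:MvPolynomial (Fin n) ℝ) ^ 2) = ∑ j, X j * X j := by
        simp [sq]
      rw [hpull, hdp, hsumconst, hsq]
      linear_combination (-(C s - ∑ j, (X j:MvPolynomial (Fin n) ℝ))) * hBC
        + (C b * C b) * hSS
        + ((n : MvPolynomial (Fin n) ℝ) * (∑ j, X j * X j)
            - (∑ j, (X j:MvPolynomial (Fin n) ℝ)) * ∑ j, X j) * hB2C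
  · -- each ℓᵢ
    intro i
    set a : ℝ := Real.sqrt (1 / (2 * Real.sqrt N)) with hadef
    have hN' : (0:ℝ) < Real.sqrt N := Real.sqrt_pos.mpr hN
    have ha : a * a * (Real.sqrt N + Real.sqrt N) = 1 := by
      rw [hadef, Real.mul_self_sqrt (by positivity)]; field_simp; ring
    refine ⟨(C a * (X i + C (Real.sqrt N))) * (C a * (X i + C (Real.sqrt N)))
        + ∑ j ∈ Finset.univ.erase i, (C a * X j) * (C a * X j),
      C a * C a + 0, ?_, ?_, ?_⟩
    · exact IsSumSq.sq_add _ (IsSumSq.sum_mul_self _ _)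
    · exact IsSumSq.sq_add _ IsSumSq.zero
    · have herase : (X i : MvPolynomial (Fin n) ℝ) * X i
          + ∑ j ∈ Finset.univ.erase i, X j * X j = ∑ j, X j * X j :=
        Finset.add_sum_erase _ _ (Finset.mem_univ i)
      have hpull : ∑ j ∈ Finset.univ.erase i, ((C a : MvPolynomial (Fin n) ℝ) * X j) * (C a * X j)
          = C a * C a * ∑ j ∈ Finset.univ.erase i, (X j : MvPolynomial (Fin n) ℝ) * X j := by
        rw [Finset.mul_sum]
        exact Finset.sum_congr rfl fun j _ => by ring
      have hAC : (C a : MvPolynomial (Fin n) ℝ) * C a * (C (Real.sqrt N) + C (Real.sqrt N)) = 1 := by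
        rw [← C_1, ← ha]; simp [C_mul, C_add]
      have hRR : (C (Real.sqrt N) : MvPolynomial (Fin n) ℝ) * C (Real.sqrt N) = C N := by
        rw [← C_mul, Real.mul_self_sqrt hN.le]
      have hsq : (∑ j, (X j:MvPolynomial (Fin n) ℝ) ^ 2) = ∑ j, X j * X j := by
        simp [sq]
      rw [hpull, hsq, ← herase]
      linear_combination (-(X i + C (Real.sqrt N))) * hAC + (C a * C a) * hRR
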